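/- Let φ ∈ [0, π] and let u_1, ..., u_k be unit vectors in ℝ² whose angles all lie in [0, φ]. If k is odd, then |u_1 + ... + u_k| ≥ √(1 + (k−1)(k+1)·cos²(φ/2)). -/

import Mathlib

open Finset Complex

lemma normSq_add_exp (v : ℂ) (θ : ℝ) :
    Complex.normSq (v + Complex.exp (θ * Complex.I)) =
      Complex.normSq v + 1 + 2 * (v.re * Real.cos θ + v.im * Real.sin θ) := by
  simp only [Complex.normSq_apply, Complex.add_re, Complex.add_im,
    Complex.exp_ofReal_mul_I_re, Complex.exp_ofReal_mul_I_im]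
  nlinarith [Real.sin_sq_add_cos_sq θ]

lemma step_lemma (a : ℝ) (ha0 : 0 ≤ a) (ha2 : a ≤ Real.pi / 2) (v : ℂ) (hv : 0 ≤ v.re)
    (θ : ℝ) (hθ1 : -a ≤ θ) (hθ2 : θ ≤ a) :
    ∃ ε : ℝ, (ε = a ∨ ε = -a) ∧
      Complex.normSq (v + Complex.exp (ε * Complex.I)) ≤
        Complex.normSq (v + Complex.exp (θ * Complex.I)) := by
  have hca : Real.cos a ≤ Real.cos θ := by
    have := Real.cos_le_cos_of_nonneg_of_le_pi (abs_nonneg θ)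
      (by linarith [Real.pi_pos] : a ≤ Real.pi) (abs_le.2 ⟨hθ1, hθ2⟩)
    rwa [Real.cos_abs] at this
  have hs1 : Real.sin (-a) ≤ Real.sin θ :=
    Real.sin_le_sin_of_le_of_le_pi_div_two (by linarith) (by linarith) hθ1
  have hs2 : Real.sin θ ≤ Real.sin a :=
    Real.sin_le_sin_of_le_of_le_pi_div_two (by linarith) ha2 hθ2
  rw [Real.sin_neg] at hs1
  by_cases him : 0 ≤ v.im
  · refine ⟨-a, Or.inr rfl, ?_⟩
    rw [normSq_add_exp, normSq_add_exp, Real.cos_neg, Real.sin_neg]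
    nlinarith [mul_le_mul_of_nonneg_left hs1 him, mul_le_mul_of_nonneg_left hca hv]
  · refine ⟨a, Or.inl rfl, ?_⟩
    rw [normSq_add_exp, normSq_add_exp]
    push_neg at him
    nlinarith [mul_le_mul_of_nonpos_left hs2 him.le, mul_le_mul_of_nonneg_left hca hv]

lemma replace_all (k : ℕ) (a : ℝ) (ha0 : 0 ≤ a) (ha2 : a ≤ Real.pi / 2)
    (s : Finset (Fin k)) (θ : Fin k → ℝ) (hθ : ∀ i, θ i ∈ Set.Icc (-a) a) :
    ∃ ε : Fin k → ℝ, (∀ i, ε i ∈ Set.Icc (-a) a) ∧ (∀ i ∈ s, ε i = a ∨ ε i = -a) ∧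
      Complex.normSq (∑ i, Complex.exp (ε i * Complex.I)) ≤
        Complex.normSq (∑ i, Complex.exp (θ i * Complex.I)) := by
  induction s using Finset.induction with
  | empty => exact ⟨θ, hθ, by simp, le_refl _⟩
  | @insert j s hj ih =>
    obtain ⟨ε, hmem, hend, hle⟩ := ih
    set v : ℂ := ∑ i ∈ Finset.univ.erase j, Complex.exp (ε i * Complex.I) with hv
    have hvre : 0 ≤ v.re := by
      rw [hv, Complex.re_sum]
      refine Finset.sum_nonneg fun i _ => ?_
      rw [Complex.exp_ofReal_mul_I_re]
      exact Real.cos_nonneg_of_mem_Icc ⟨by linarith [(hmem i).1], by linarith [(hmem i).2]⟩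
    obtain ⟨ε', hε', hle'⟩ := step_lemma a ha0 ha2 v hvre (ε j) (hmem j).1 (hmem j).2
    refine ⟨Function.update ε j ε', ?_, ?_, ?_⟩
    · intro i
      rcases eq_or_ne i j with rfl | h
      · rw [Function.update_self]
        rcases hε' with rfl | rfl
        · exact ⟨by linarith, le_refl _⟩
        · exact ⟨le_refl _, by linarith⟩
      · rw [Function.update_of_ne h]; exact hmem i
    · intro i hi
      rcases eq_or_ne i j with rfl | h
      · rw [Function.update_self]; exact hε'
      · rw [Function.update_of_ne h]
        exact hend i ((Finset.mem_insert.1 hi).resolve_left h)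
    · have hfun : ∀ i, Complex.exp (↑(Function.update ε j ε' i) * Complex.I)
          = Function.update (fun i => Complex.exp (ε i * Complex.I)) j
              (Complex.exp (ε' * Complex.I)) i := by
        intro i
        rcases eq_or_ne i j with rfl | h
        · simp
        · rw [Function.update_of_ne h, Function.update_of_ne h]
      have h1 : ∑ i, Complex.exp (↑(Function.update ε j ε' i) * Complex.I)
          = Complex.exp (ε' * Complex.I) + v := by
        rw [Finset.sum_congr rfl (fun i _ => hfun i),
          Finset.sum_update_of_mem (Finset.mem_univ j), hv, Finset.erase_eq]
      have h2 : Complex.exp (ε j * Complex.I) + v = ∑ i, Complex.exp (ε i * Complex.I) := by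
        rw [hv]; exact Finset.add_sum_erase Finset.univ (fun i => Complex.exp (ε i * Complex.I)) (Finset.mem_univ j)
      rw [h1]
      calc Complex.normSq (Complex.exp (ε' * Complex.I) + v)
          = Complex.normSq (v + Complex.exp (ε' * Complex.I)) := by rw [add_comm]
        _ ≤ Complex.normSq (v + Complex.exp ((ε j) * Complex.I)) := hle'
        _ = Complex.normSq (∑ i, Complex.exp (ε i * Complex.I)) := by rw [← h2, add_comm]
        _ ≤ _ := hle

theorem stmt_15 (k : ℕ) (hk : Odd k) (φ : ℝ) (hφ : φ ∈ Set.Icc 0 Real.pi)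
    (u : Fin k → ℂ) (hu : ∀ i, ∃ ψ ∈ Set.Icc 0 φ, u i = Complex.exp (ψ * Complex.I)) :
    ‖∑ i, u i‖ ≥
      Real.sqrt (1 + ((k : ℝ) - 1) * ((k : ℝ) + 1) * Real.cos (φ / 2) ^ 2) := by
  obtain ⟨hφ0, hφπ⟩ := hφ
  choose ψ hψmem hψval using hu
  set a : ℝ := φ / 2 with ha
  have ha0 : 0 ≤ a := by positivity
  have ha2 : a ≤ Real.pi / 2 := by rw [ha]; linarith
  set θ : Fin k → ℝ := fun i => ψ i - a with hθdef
  have hθ : ∀ i, θ i ∈ Set.Icc (-a) a := fun i =>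
    ⟨by simp only [hθdef]; linarith [(hψmem i).1], by simp only [hθdef]; linarith [(hψmem i).2]⟩
  -- rotate
  have hrot : ‖∑ i, u i‖ = ‖∑ i, Complex.exp (θ i * Complex.I)‖ := by
    have : ∑ i, u i = Complex.exp (a * Complex.I) * ∑ i, Complex.exp (θ i * Complex.I) := by
      rw [Finset.mul_sum]
      refine Finset.sum_congr rfl fun i _ => ?_
      rw [hψval i, ← Complex.exp_add]
      congr 1
      push_cast [hθdef]
      ring
    rw [this, norm_mul, Complex.norm_exp_ofReal_mul_I, one_mul]
  obtain ⟨ε, hmem, hend, hle⟩ := replace_all k a ha0 ha2 Finset.univ θ hθ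
  -- compute the sum for ε
  set ι : Fin k → ℤ := fun i => if ε i = a then 1 else -1 with hι
  have hεval : ∀ i, ε i = (ι i : ℝ) * a := by
    intro i
    rcases hend i (Finset.mem_univ i) with h | h
    · simp [hι, h]
    · simp only [hι, h]
      split_ifs with hc
      · push_cast; linarith
      · push_cast; ring
  have hcos : ∀ i, Real.cos (ε i) = Real.cos a := by
    intro i
    rcases hend i (Finset.mem_univ i) with h | h
    · rw [h]
    · rw [h, Real.cos_neg]
  have hsin : ∀ i, Real.sin (ε i) = (ι i : ℝ) * Real.sin a := by
    intro i
    rcases hend i (Finset.mem_univ i) with h | h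
    · simp [hι, h]
    · simp only [hι, h, Real.sin_neg]
      split_ifs with hc
      · have haz : a = 0 := by linarith
        simp [haz]
      · push_cast; ring
  set m : ℤ := ∑ i, ι i with hm
  have hmodd : Odd m := by
    have : ∀ i, ι i % 2 = 1 := by
      intro i
      rcases hend i (Finset.mem_univ i) with h | h <;> simp [hι, h] <;> split <;> decide
    rw [Int.odd_iff, hm, Finset.sum_int_mod]
    simp only [this]
    simp only [Finset.sum_const, Finset.card_univ, Fintype.card_fin, nsmul_eq_mul, mul_one]
    rw [← Int.odd_iff]
    exact_mod_cast hk
  have hm1 : (1 : ℝ) ≤ (m : ℝ) ^ 2 := by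
    have hne : m ≠ 0 := by intro h0; rw [h0] at hmodd; simp at hmodd
    have h1 : 1 ≤ |m| := Int.one_le_abs hne
    have : (1 : ℤ) ≤ m ^ 2 := by nlinarith [_root_.sq_abs m]
    exact_mod_cast this
  have hre : (∑ i, Complex.exp (ε i * Complex.I)).re = (k : ℝ) * Real.cos a := by
    rw [Complex.re_sum]
    simp only [Complex.exp_ofReal_mul_I_re, hcos]
    simp [Finset.sum_const, Finset.card_univ]
  have him : (∑ i, Complex.exp (ε i * Complex.I)).im = (m : ℝ) * Real.sin a := by
    rw [Complex.im_sum]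
    simp only [Complex.exp_ofReal_mul_I_im, hsin]
    rw [← Finset.sum_mul, hm]
    push_cast
    ring
  have hkey : 1 + ((k : ℝ) - 1) * ((k : ℝ) + 1) * Real.cos a ^ 2 ≤
      Complex.normSq (∑ i, Complex.exp (ε i * Complex.I)) := by
    rw [Complex.normSq_apply, hre, him]
    nlinarith [Real.sin_sq_add_cos_sq a, hm1, sq_nonneg (Real.sin a),
      sq_nonneg ((k : ℝ) * Real.cos a), sq_nonneg (Real.cos a)]
  rw [ge_iff_le, hrot, Complex.norm_def]
  exact Real.sqrt_le_sqrt (by linarith)
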